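/- Let D = (P, B) be a 3-(v,k,1) design admitting a block-transitive group G of automorphisms. Then for every nontrivial subdegree d of G on P (i.e. the length d of an orbit of G_α on P other than {α}), the product (v-1)(v-2) divides k(k-1)(k-2)·d·(d-1). -/

import Mathlib

open Finset

private lemma dc {α β : Type*} (S : Finset α) (A : Finset β) (p : α → β → Prop)
    [∀ a b, Decidable (p a b)] :
    ∑ s ∈ S, (A.filter (fun a => p s a)).card
      = ∑ a ∈ A, (S.filter (fun s => p s a)).card := by
  simp only [Finset.card_filter]
  exact Finset.sum_comm

set_option maxHeartbeats 1600000

theorem block_transitive_subdegree_divisibility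
    (P : Type*) [Fintype P] [DecidableEq P]
    (𝓑 : Finset (Finset P)) (v k : ℕ)
    (hv : Fintype.card P = v)
    (hk3 : 3 ≤ k) (hkv : k ≤ v)
    (hblocks : ∀ b ∈ 𝓑, b.card = k)
    (hdesign : ∀ s : Finset P, s.card = 3 →
      (𝓑.filter (fun b => s ⊆ b)).card = 1)
    (G : Type*) [Group G] [Finite G] [MulAction G P] [FaithfulSMul G P]
    (hpres : ∀ (g : G), ∀ b ∈ 𝓑, b.image (fun x => g • x) ∈ 𝓑)
    (htrans : ∀ b₁ ∈ 𝓑, ∀ b₂ ∈ 𝓑, ∃ g : G, b₁.image (fun x => g • x) = b₂)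
    (α β : P) (hnt : MulAction.orbit (MulAction.stabilizer G α) β ≠ {α}) :
    (v - 1) * (v - 2) ∣
      k * (k - 1) * (k - 2) *
        (MulAction.orbit (MulAction.stabilizer G α) β).ncard *
        ((MulAction.orbit (MulAction.stabilizer G α) β).ncard - 1) := by
  classical
  rcases eq_or_lt_of_le hkv with hvk | hvk
  · -- k = v : trivial case
    subst hvk
    exact ⟨k * (MulAction.orbit (MulAction.stabilizer G α) β).ncard *
      ((MulAction.orbit (MulAction.stabilizer G α) β).ncard - 1), by ring⟩
  have hv4 : 4 ≤ v := by omega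
  set d := (MulAction.orbit (MulAction.stabilizer G α) β).ncard with hd
  -- ## step 0 : basic counting lemmas
  have hvcard : (Finset.univ : Finset P).card = v := by simpa using hv
  have L1 : ∀ x y : P, x ≠ y →
      ((𝓑.filter (fun b => x ∈ b ∧ y ∈ b)).card) * (k - 2) = v - 2 := by
    intro x y hxy
    set F := 𝓑.filter (fun b => x ∈ b ∧ y ∈ b) with hF
    have key := dc F (Finset.univ \ {x, y}) (fun b z => z ∈ b)
    have h1 : ∀ b ∈ F,
        ((Finset.univ \ ({x, y} : Finset P)).filter (fun z => z ∈ b)).card = k - 2 := by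
      intro b hb
      rw [hF, Finset.mem_filter] at hb
      have hsub : ({x, y} : Finset P) ⊆ b := by
        intro z hz
        rcases Finset.mem_insert.1 hz with rfl | hz
        · exact hb.2.1
        · rw [Finset.mem_singleton] at hz; subst hz; exact hb.2.2
      have he : (Finset.univ \ ({x, y} : Finset P)).filter (fun z => z ∈ b)
          = b \ {x, y} := by
        ext z
        simp only [Finset.mem_filter, Finset.mem_sdiff, Finset.mem_univ, true_and]
        tauto
      rw [he, Finset.card_sdiff_of_subset hsub, hblocks b hb.1,
        Finset.card_insert_of_notMem (by simp [hxy]), Finset.card_singleton]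
    have h2 : ∀ z ∈ Finset.univ \ ({x, y} : Finset P),
        (F.filter (fun b => z ∈ b)).card = 1 := by
      intro z hz
      simp only [Finset.mem_sdiff, Finset.mem_univ, true_and, Finset.mem_insert,
        Finset.mem_singleton, not_or] at hz
      have hcard : ({x, y, z} : Finset P).card = 3 := by
        rw [Finset.card_insert_of_notMem (by simp [hxy, Ne.symm hz.1]),
          Finset.card_insert_of_notMem (by simp [Ne.symm hz.2]), Finset.card_singleton]
      have hdes := hdesign {x, y, z} hcard
      rw [← hdes]
      congr 1
      ext b
      simp only [hF, Finset.filter_filter, Finset.mem_filter, Finset.insert_subset_iff,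
        Finset.singleton_subset_iff]
      tauto
    rw [Finset.sum_congr rfl h1, Finset.sum_congr rfl h2, Finset.sum_const, Finset.sum_const,
      smul_eq_mul, smul_eq_mul, mul_one] at key
    rw [key, Finset.card_sdiff_of_subset (Finset.subset_univ _), hvcard,
      Finset.card_insert_of_notMem (by simp [hxy]), Finset.card_singleton]
  have L2 : ∀ x : P, (𝓑.filter (fun b => x ∈ b)).card * ((k - 1) * (k - 2))
      = (v - 1) * (v - 2) := by
    intro x
    set R := 𝓑.filter (fun b => x ∈ b) with hR
    have key := dc R (Finset.univ \ {x}) (fun b z => z ∈ b)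
    have h1 : ∀ b ∈ R,
        ((Finset.univ \ ({x} : Finset P)).filter (fun z => z ∈ b)).card = k - 1 := by
      intro b hb
      rw [hR, Finset.mem_filter] at hb
      have he : (Finset.univ \ ({x} : Finset P)).filter (fun z => z ∈ b) = b \ {x} := by
        ext z
        simp only [Finset.mem_filter, Finset.mem_sdiff, Finset.mem_univ, true_and]
        tauto
      rw [he, Finset.card_sdiff_of_subset (by simpa using hb.2), hblocks b hb.1, Finset.card_singleton]
    rw [Finset.sum_congr rfl h1, Finset.sum_const, smul_eq_mul] at key
    have step : R.card * (k - 1) * (k - 2)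
        = ∑ z ∈ Finset.univ \ {x}, ((R.filter (fun b => z ∈ b)).card) * (k - 2) := by
      rw [key, Finset.sum_mul]
    have h2 : ∀ z ∈ Finset.univ \ ({x} : Finset P),
        ((R.filter (fun b => z ∈ b)).card) * (k - 2) = v - 2 := by
      intro z hz
      simp only [Finset.mem_sdiff, Finset.mem_univ, true_and, Finset.mem_singleton] at hz
      have he : R.filter (fun b => z ∈ b) = 𝓑.filter (fun b => x ∈ b ∧ z ∈ b) := by
        rw [hR, Finset.filter_filter]
      rw [he]
      exact L1 x z (Ne.symm hz)
    rw [Finset.sum_congr rfl h2, Finset.sum_const, smul_eq_mul,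
      Finset.card_sdiff_of_subset (Finset.subset_univ _), hvcard, Finset.card_singleton] at step
    rw [← mul_assoc]
    exact step
  have L3 : 𝓑.card * (k * (k - 1) * (k - 2)) = v * (v - 1) * (v - 2) := by
    have key := dc 𝓑 (Finset.univ : Finset P) (fun b z => z ∈ b)
    have h1 : ∀ b ∈ 𝓑, ((Finset.univ : Finset P).filter (fun z => z ∈ b)).card = k := by
      intro b hb
      rw [Finset.filter_univ_mem]
      exact hblocks b hb
    rw [Finset.sum_congr rfl h1, Finset.sum_const, smul_eq_mul] at key
    have step : 𝓑.card * k * ((k - 1) * (k - 2))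
        = ∑ z : P, ((𝓑.filter (fun b => z ∈ b)).card) * ((k - 1) * (k - 2)) := by
      rw [key, Finset.sum_mul]
    rw [Finset.sum_congr rfl (fun z _ => L2 z), Finset.sum_const, smul_eq_mul, hvcard] at step
    calc 𝓑.card * (k * (k - 1) * (k - 2)) = 𝓑.card * k * ((k - 1) * (k - 2)) := by ring
      _ = v * ((v - 1) * (v - 2)) := step
      _ = v * (v - 1) * (v - 2) := by ring
  -- ## step 1 : point transitivity
  have htransP : ∀ x : P, x ∈ MulAction.orbit G α := by
    set O : Finset P := Finset.univ.filter (fun x => x ∈ MulAction.orbit G α) with hO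
    have hαO : α ∈ O := by
      simp only [hO, Finset.mem_filter, Finset.mem_univ, true_and]
      exact MulAction.mem_orbit_self α
    have hOinv : ∀ (g : G) (x : P), x ∈ O → g • x ∈ O := by
      intro g x hx
      simp only [hO, Finset.mem_filter, Finset.mem_univ, true_and] at hx ⊢
      obtain ⟨h, hh⟩ := hx
      exact ⟨g * h, by rw [show (fun m : G => m • α) (g * h) = (g * h) • α from rfl,
        mul_smul, show h • α = x from hh]⟩
    set m := O.card with hm
    have hm1 : 1 ≤ m := Finset.card_pos.2 ⟨α, hαO⟩
    have hkk : 0 < (k - 1) * (k - 2) := Nat.mul_pos (by omega) (by omega)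
    have hvv : 0 < (v - 1) * (v - 2) := Nat.mul_pos (by omega) (by omega)
    -- a block through α
    have hrpos : 0 < (𝓑.filter (fun b => α ∈ b)).card := by
      rcases Nat.eq_zero_or_pos (𝓑.filter (fun b => α ∈ b)).card with h0 | h
      · exfalso
        have := L2 α
        rw [h0, zero_mul] at this
        omega
      · exact h
    obtain ⟨b₁, hb₁⟩ := Finset.card_pos.1 hrpos
    rw [Finset.mem_filter] at hb₁
    set c := (b₁ ∩ O).card with hc
    have hcpos : 0 < c := Finset.card_pos.2 ⟨α, Finset.mem_inter.2 ⟨hb₁.2, hαO⟩⟩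
    -- constancy of |b ∩ O|
    have hconst : ∀ b ∈ 𝓑, (b ∩ O).card = c := by
      intro b hb
      obtain ⟨g, hg⟩ := htrans b₁ hb₁.1 b hb
      have himg : b ∩ O = (b₁ ∩ O).image (fun x => g • x) := by
        ext y
        simp only [Finset.mem_inter, Finset.mem_image]
        constructor
        · rintro ⟨hyb, hyO⟩
          refine ⟨g⁻¹ • y, ⟨?_, hOinv g⁻¹ y hyO⟩, by simp⟩
          rw [← hg] at hyb
          obtain ⟨w, hw, hw2⟩ := Finset.mem_image.1 hyb
          rw [← hw2, inv_smul_smul]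
          exact hw
        · rintro ⟨z, ⟨hzb, hzO⟩, rfl⟩
          exact ⟨hg ▸ Finset.mem_image_of_mem _ hzb, hOinv g z hzO⟩
      rw [himg, Finset.card_image_of_injective _ (MulAction.injective g)]
    -- first equation
    have E1 : c * 𝓑.card * ((k - 1) * (k - 2)) = m * ((v - 1) * (v - 2)) := by
      have key := dc 𝓑 O (fun b x => x ∈ b)
      have h1 : ∀ b ∈ 𝓑, (O.filter (fun x => x ∈ b)).card = c := by
        intro b hb
        rw [show O.filter (fun x => x ∈ b) = b ∩ O from by
          ext z; simp only [Finset.mem_filter, Finset.mem_inter]; tauto]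
        exact hconst b hb
      rw [Finset.sum_congr rfl h1, Finset.sum_const, smul_eq_mul] at key
      -- key : 𝓑.card * c = ∑ x ∈ O, r x
      have step : 𝓑.card * c * ((k - 1) * (k - 2))
          = ∑ x ∈ O, (𝓑.filter (fun b => x ∈ b)).card * ((k - 1) * (k - 2)) := by
        rw [key, Finset.sum_mul]
      rw [Finset.sum_congr rfl (fun x _ => L2 x), Finset.sum_const, smul_eq_mul] at step
      rw [show c * 𝓑.card = 𝓑.card * c from mul_comm _ _]
      exact step
    -- second equation
    have E2 : (c * c - c) * 𝓑.card * (k - 2) = (m * m - m) * (v - 2) := by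
      have key := dc 𝓑 O.offDiag (fun b p => p.1 ∈ b ∧ p.2 ∈ b)
      have h1 : ∀ b ∈ 𝓑,
          (O.offDiag.filter (fun p => p.1 ∈ b ∧ p.2 ∈ b)).card = c * c - c := by
        intro b hb
        rw [show O.offDiag.filter (fun p => p.1 ∈ b ∧ p.2 ∈ b) = (b ∩ O).offDiag from by
          ext p
          simp only [Finset.mem_filter, Finset.mem_offDiag, Finset.mem_inter]
          tauto]
        rw [Finset.offDiag_card, hconst b hb]
      rw [Finset.sum_congr rfl h1, Finset.sum_const, smul_eq_mul] at key
      have step : 𝓑.card * (c * c - c) * (k - 2)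
          = ∑ p ∈ O.offDiag, (𝓑.filter (fun b => p.1 ∈ b ∧ p.2 ∈ b)).card * (k - 2) := by
        rw [key, Finset.sum_mul]
      have h2 : ∀ p ∈ O.offDiag,
          (𝓑.filter (fun b => p.1 ∈ b ∧ p.2 ∈ b)).card * (k - 2) = v - 2 := by
        intro p hp
        rw [Finset.mem_offDiag] at hp
        exact L1 p.1 p.2 hp.2.2
      rw [Finset.sum_congr rfl h2, Finset.sum_const, smul_eq_mul,
        Finset.offDiag_card] at step
      rw [show (c * c - c) * 𝓑.card * (k - 2) = 𝓑.card * (c * c - c) * (k - 2) from by ring]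
      rw [step, hm]
    -- integer algebra : m = v
    have hmv : m = v := by
      clear_value c m
      have hcc : c ≤ c * c := Nat.le_mul_of_pos_right c hcpos
      have hmm : m ≤ m * m := Nat.le_mul_of_pos_right m hm1
      have I1 : (c : ℤ) * 𝓑.card * (((k : ℤ) - 1) * ((k : ℤ) - 2))
          = (m : ℤ) * (((v : ℤ) - 1) * ((v : ℤ) - 2)) := by
        zify [show 1 ≤ k by omega, show 2 ≤ k by omega,
          show 1 ≤ v by omega, show 2 ≤ v by omega] at E1
        exact E1
      have I2 : ((c : ℤ) * c - c) * 𝓑.card * ((k : ℤ) - 2)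
          = ((m : ℤ) * m - m) * ((v : ℤ) - 2) := by
        zify [hcc, hmm, show 2 ≤ k by omega, show 2 ≤ v by omega] at E2
        exact E2
      have I3 : (𝓑.card : ℤ) * ((k : ℤ) * ((k : ℤ) - 1) * ((k : ℤ) - 2))
          = (v : ℤ) * ((v : ℤ) - 1) * ((v : ℤ) - 2) := by
        zify [show 1 ≤ k by omega, show 2 ≤ k by omega,
          show 1 ≤ v by omega, show 2 ≤ v by omega] at L3
        exact L3
      have hC1 : (1 : ℤ) ≤ (c : ℤ) := by exact_mod_cast hcpos
      have hM1 : (1 : ℤ) ≤ (m : ℤ) := by exact_mod_cast hm1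
      have hK3 : (3 : ℤ) ≤ (k : ℤ) := by exact_mod_cast hk3
      have hKV : (k : ℤ) < (v : ℤ) := by exact_mod_cast hvk
      have hV4 : (4 : ℤ) ≤ (v : ℤ) := by exact_mod_cast hv4
      -- c·v = m·k
      have h4 : (c : ℤ) * v = (m : ℤ) * k := by
        have h0 : ((c : ℤ) * v - (m : ℤ) * k) * (((v : ℤ) - 1) * ((v : ℤ) - 2)) = 0 := by
          linear_combination (k : ℤ) * I1 - (c : ℤ) * I3
        rcases mul_eq_zero.1 h0 with h | h
        · linarith
        · rcases mul_eq_zero.1 h with h | h <;> linarith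
      -- (m-1)(k-1) = (c-1)(v-1)
      have h5 : ((m : ℤ) - 1) * ((k : ℤ) - 1) = ((c : ℤ) - 1) * ((v : ℤ) - 1) := by
        have h0 : ((m : ℤ) * ((v : ℤ) - 2))
            * (((c : ℤ) - 1) * ((v : ℤ) - 1) - ((m : ℤ) - 1) * ((k : ℤ) - 1)) = 0 := by
          linear_combination ((k : ℤ) - 1) * I2 - ((c : ℤ) - 1) * I1
        rcases mul_eq_zero.1 h0 with h | h
        · rcases mul_eq_zero.1 h with h | h <;> linarith
        · linarith
      have hC : (c : ℤ) = (m : ℤ) + k - v := by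
        linear_combination h4 + h5
      have h6 : ((m : ℤ) - v) * ((v : ℤ) - k) = 0 := by
        have h7 : ((m : ℤ) + k - v) * v = (m : ℤ) * k := by rw [← hC]; exact h4
        linear_combination h7
      have h8 : (m : ℤ) = v := by
        rcases mul_eq_zero.1 h6 with h | h <;> omega
      exact_mod_cast h8
    have hOuniv : O = Finset.univ := Finset.eq_univ_of_card O (by rw [← hm, hmv, hv])
    intro x
    have hx : x ∈ O := hOuniv ▸ Finset.mem_univ x
    rw [hO, Finset.mem_filter] at hx
    exact hx.2
  -- ## step 2 : the orbital and its fibers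
  set Orb : Set (P × P) := MulAction.orbit G (α, β) with hOrb
  set Δ : P → Finset P := fun x => Finset.univ.filter (fun y => (x, y) ∈ Orb) with hΔ
  have hαβ : α ≠ β := by
    intro h
    apply hnt
    ext y
    simp only [Set.mem_singleton_iff]
    constructor
    · rintro ⟨g, rfl⟩
      show (g : G) • β = α
      rw [← h]
      exact g.2
    · rintro rfl
      exact ⟨1, by simp [← h]⟩
  have hOrbne : ∀ p ∈ Orb, p.1 ≠ p.2 := by
    rintro ⟨x, y⟩ ⟨g, hg⟩ h
    have hg' : g • (α, β) = (x, y) := hg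
    rw [Prod.smul_mk, Prod.mk.injEq] at hg'
    obtain ⟨h1, h2⟩ := hg' 
    subst h1; subst h2
    exact hαβ (MulAction.injective g h)
  have hOrbsmul : ∀ (g : G) (p : P × P), p ∈ Orb → (g • p.1, g • p.2) ∈ Orb := by
    rintro g p ⟨h, hh⟩
    refine ⟨g * h, ?_⟩
    show (g * h) • (α, β) = (g • p.1, g • p.2)
    rw [mul_smul, show h • (α, β) = p from hh]
    rfl
  have hΔα : ∀ y : P, y ∈ Δ α ↔ y ∈ MulAction.orbit (MulAction.stabilizer G α) β := by
    intro y
    simp only [hΔ, Finset.mem_filter, Finset.mem_univ, true_and]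
    constructor
    · rintro ⟨g, hg⟩
      have hg' : g • (α, β) = (α, y) := hg
      rw [Prod.smul_mk, Prod.mk.injEq] at hg'
      exact ⟨⟨g, hg'.1⟩, hg'.2⟩
    · rintro ⟨⟨g, hgst⟩, rfl⟩
      refine ⟨g, ?_⟩
      show g • (α, β) = (α, _)
      rw [Prod.smul_mk]
      exact Prod.ext hgst rfl
  have hΔαd : (Δ α).card = d := by
    rw [hd, ← Set.ncard_coe_finset (Δ α)]
    congr 1
    ext y
    simpa using hΔα y
  have hΔd : ∀ x : P, (Δ x).card = d := by
    intro x
    obtain ⟨g, hg⟩ := htransP x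
    have himg : Δ x = (Δ α).image (fun y => g • y) := by
      ext y
      simp only [hΔ, Finset.mem_filter, Finset.mem_univ, true_and, Finset.mem_image]
      constructor
      · intro hy
        refine ⟨g⁻¹ • y, ?_, by simp⟩
        have hmem := hOrbsmul g⁻¹ (x, y) hy
        have hx : g⁻¹ • x = α := by rw [← hg, inv_smul_smul]
        rwa [hx] at hmem
      · rintro ⟨z, hz, rfl⟩
        have hmem := hOrbsmul g (α, z) hz
        rwa [show g • α = x from hg] at hmem
    rw [himg, Finset.card_image_of_injective _ (MulAction.injective g), hΔαd]
  -- ## step 3 : double counting the triples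
  set T : Finset ((_ : P) × P × P) :=
    Finset.univ.sigma (fun x => (Δ x).offDiag) with hT
  have hTcard : T.card = v * (d * d - d) := by
    rw [hT, Finset.card_sigma]
    have h1 : ∀ x : P, ((Δ x).offDiag).card = d * d - d := by
      intro x
      rw [Finset.offDiag_card, hΔd x]
    rw [Finset.sum_congr rfl (fun x _ => h1 x), Finset.sum_const, smul_eq_mul, hvcard]
  -- fibers of the map "triple ↦ its unique block"
  have hBne : 𝓑.Nonempty := by
    obtain ⟨t, -, ht⟩ := Finset.exists_subset_card_eq (s := (Finset.univ : Finset P)) (n := 3)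
      (by rw [hvcard]; omega)
    have hdes := hdesign t ht
    obtain ⟨b, hb⟩ := Finset.card_pos.1 (by omega : 0 < (𝓑.filter (fun b => t ⊆ b)).card)
    exact ⟨b, (Finset.mem_filter.1 hb).1⟩
  obtain ⟨b₀, hb₀⟩ := hBne
  set fib : Finset P → Finset ((_ : P) × P × P) :=
    fun b => T.filter (fun t => t.1 ∈ b ∧ t.2.1 ∈ b ∧ t.2.2 ∈ b) with hfibdef
  have hTmem : ∀ (g : G) (t : (_ : P) × P × P), t ∈ T →
      (⟨g • t.1, g • t.2.1, g • t.2.2⟩ : (_ : P) × P × P) ∈ T := by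
    rintro g ⟨x, y, z⟩ ht
    simp only [hT, Finset.mem_sigma, Finset.mem_univ, true_and, Finset.mem_offDiag,
      hΔ, Finset.mem_filter] at ht ⊢
    obtain ⟨hxy, hxz, hyz⟩ := ht
    exact ⟨hOrbsmul g (x, y) hxy, hOrbsmul g (x, z) hxz,
      fun h => hyz (MulAction.injective g h)⟩
  have hfibconst : ∀ b ∈ 𝓑, (fib b).card = (fib b₀).card := by
    intro b hb
    obtain ⟨g, hg⟩ := htrans b hb b₀ hb₀
    apply Finset.card_bij'
      (fun t _ => (⟨g • t.1, g • t.2.1, g • t.2.2⟩ : (_ : P) × P × P))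
      (fun t _ => (⟨g⁻¹ • t.1, g⁻¹ • t.2.1, g⁻¹ • t.2.2⟩ : (_ : P) × P × P))
    · intro t ht
      rw [hfibdef] at ht ⊢
      simp only [Finset.mem_filter] at ht ⊢
      refine ⟨hTmem g t ht.1, ?_, ?_, ?_⟩
      · rw [← hg]; exact Finset.mem_image_of_mem _ ht.2.1
      · rw [← hg]; exact Finset.mem_image_of_mem _ ht.2.2.1
      · rw [← hg]; exact Finset.mem_image_of_mem _ ht.2.2.2
    · intro t ht
      rw [hfibdef] at ht ⊢
      simp only [Finset.mem_filter] at ht ⊢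
      have hback : ∀ w : P, w ∈ b₀ → g⁻¹ • w ∈ b := by
        intro w hw
        rw [← hg] at hw
        obtain ⟨u, hu, hu2⟩ := Finset.mem_image.1 hw
        rw [← hu2, inv_smul_smul]
        exact hu
      exact ⟨hTmem g⁻¹ t ht.1, hback _ ht.2.1, hback _ ht.2.2.1, hback _ ht.2.2.2⟩
    · rintro ⟨x, y, z⟩ ht
      simp [inv_smul_smul]
    · rintro ⟨x, y, z⟩ ht
      simp [smul_inv_smul]
  have hsum : T.card = ∑ b ∈ 𝓑, (fib b).card := by
    have key := dc 𝓑 T (fun b t => t.1 ∈ b ∧ t.2.1 ∈ b ∧ t.2.2 ∈ b)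
    have h2 : ∀ t ∈ T,
        (𝓑.filter (fun b => t.1 ∈ b ∧ t.2.1 ∈ b ∧ t.2.2 ∈ b)).card = 1 := by
      rintro ⟨x, y, z⟩ ht
      simp only [hT, Finset.mem_sigma, Finset.mem_univ, true_and, Finset.mem_offDiag,
        hΔ, Finset.mem_filter] at ht
      obtain ⟨hxy, hxz, hyz⟩ := ht
      have hxy' : x ≠ y := hOrbne (x, y) hxy
      have hxz' : x ≠ z := hOrbne (x, z) hxz
      have hcard : ({x, y, z} : Finset P).card = 3 := by
        rw [Finset.card_insert_of_notMem (by simp [hxy', hxz']),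
          Finset.card_insert_of_notMem (by simp [hyz]), Finset.card_singleton]
      have hdes := hdesign {x, y, z} hcard
      rw [← hdes]
      congr 1
      ext b
      simp only [Finset.mem_filter, Finset.insert_subset_iff, Finset.singleton_subset_iff]
    rw [Finset.sum_congr rfl h2, Finset.sum_const, smul_eq_mul, mul_one] at key
    exact key.symm
  have hTB : T.card = 𝓑.card * (fib b₀).card := by
    rw [hsum, Finset.sum_congr rfl hfibconst, Finset.sum_const, smul_eq_mul]
  set n := (fib b₀).card with hn
  have key : (d * d - d) * (k * (k - 1) * (k - 2)) = n * ((v - 1) * (v - 2)) := by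
    have h1 : v * (d * d - d) * (k * (k - 1) * (k - 2)) = n * (v * (v - 1) * (v - 2)) := by
      rw [← L3, ← hTcard, hTB]; ring
    have hv0 : 0 < v := by omega
    have h2 : v * ((d * d - d) * (k * (k - 1) * (k - 2)))
        = v * (n * ((v - 1) * (v - 2))) := by
      rw [show v * ((d * d - d) * (k * (k - 1) * (k - 2)))
        = v * (d * d - d) * (k * (k - 1) * (k - 2)) from by ring, h1]; ring
    exact Nat.eq_of_mul_eq_mul_left hv0 h2
  have hdd : d * (d - 1) = d * d - d := by
    cases d with
    | zero => simp
    | succ m =>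
      simp only [Nat.succ_sub_one]
      have : (m + 1) * (m + 1) = (m + 1) * m + (m + 1) := by ring
      omega
  exact ⟨n, by
    rw [show k * (k - 1) * (k - 2) * d * (d - 1)
      = d * (d - 1) * (k * (k - 1) * (k - 2)) from by ring, hdd, key]; ring⟩
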